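/- Let C be a core covariance matrix (a p×p symmetric positive definite matrix with P1(C, I_{p2}) = p2·I_{p1} and P2(C, I_{p1}) = p1·I_{p2}), and let H = H2 ⊛ H1 with H1 (p1×p1) and H2 (p2×p2) invertible real matrices. Then the separable positive definite matrix H Hᵀ minimizes d(K : H C Hᵀ) over all separable positive definite p×p matrices K. -/

import Mathlib

open Matrix BigOperators Filter

/-- The separable (Kronecker) product `M2 ⊛ M1`: entry at `((i,j),(i',j'))` is
`M1 i i' * M2 j j'`. -/
noncomputable def sep {p1 p2 : ℕ} (M1 : Matrix (Fin p1) (Fin p1) ℝ)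
    (M2 : Matrix (Fin p2) (Fin p2) ℝ) :
    Matrix (Fin p1 × Fin p2) (Fin p1 × Fin p2) ℝ :=
  fun x y => M1 x.1 y.1 * M2 x.2 y.2

/-- A `p × p` matrix is separable positive definite if it is the separable product of
two symmetric positive definite matrices. -/
def SepPD {p1 p2 : ℕ} (K : Matrix (Fin p1 × Fin p2) (Fin p1 × Fin p2) ℝ) : Prop :=
  ∃ (S1 : Matrix (Fin p1) (Fin p1) ℝ) (S2 : Matrix (Fin p2) (Fin p2) ℝ),
    S1.PosDef ∧ S2.PosDef ∧ K = sep S1 S2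

/-- The divergence `d(K : S) = log det K + trace (K⁻¹ S)`. -/
noncomputable def dvg {ι : Type*} [Fintype ι] [DecidableEq ι] (K S : Matrix ι ι ℝ) : ℝ :=
  Real.log K.det + (K⁻¹ * S).trace

/-- `P1 S B` has entries `∑_{j,j'} B j j' * S (i,j) (i',j')`. -/
noncomputable def P1 {p1 p2 : ℕ} (S : Matrix (Fin p1 × Fin p2) (Fin p1 × Fin p2) ℝ)
    (B : Matrix (Fin p2) (Fin p2) ℝ) : Matrix (Fin p1) (Fin p1) ℝ :=
  fun i i' => ∑ j, ∑ j', B j j' * S (i, j) (i', j')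

/-- `P2 S A` has entries `∑_{i,i'} A i i' * S (i,j) (i',j')`. -/
noncomputable def P2 {p1 p2 : ℕ} (S : Matrix (Fin p1 × Fin p2) (Fin p1 × Fin p2) ℝ)
    (A : Matrix (Fin p1) (Fin p1) ℝ) : Matrix (Fin p2) (Fin p2) ℝ :=
  fun j j' => ∑ i, ∑ i', A i i' * S (i, j) (i', j')

open Kronecker


lemma posDef_conj {n : Type*} [Fintype n] [DecidableEq n] {M : Matrix n n ℝ}
    (hM : M.PosDef) (N : Matrix n n ℝ) (hN : IsUnit N.det) : (Nᵀ * M * N).PosDef := by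
  rw [posDef_iff_dotProduct_mulVec]
  constructor
  · have h : Mᵀ = M := by
      have := hM.1.eq; rwa [conjTranspose_eq_transpose_of_trivial] at this
    show (Nᵀ * M * N)ᴴ = _
    rw [conjTranspose_eq_transpose_of_trivial, transpose_mul, transpose_mul,
      transpose_transpose, h, mul_assoc]
  · intro x hx
    have hNx : N *ᵥ x ≠ 0 :=
      fun h => hx ((Matrix.mulVec_injective_iff_isUnit.mpr ((isUnit_iff_isUnit_det N).2 hN)).eq_iff.mp
        (by simp [h]))
    have h2 := hM.dotProduct_mulVec_pos hNx
    have : star x ⬝ᵥ (Nᵀ * M * N) *ᵥ x = star (N *ᵥ x) ⬝ᵥ M *ᵥ (N *ᵥ x) := by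
      simp [star_trivial, mul_assoc, ← mulVec_mulVec, dotProduct_mulVec, vecMul_transpose]
    rw [this]; exact h2



lemma posDef_mul_transpose_self {n : Type*} [Fintype n] [DecidableEq n]
    (M : Matrix n n ℝ) (h : IsUnit M.det) : (M * Mᵀ).PosDef := by
  have e : M * Mᵀ = Mᵀᵀ * 1 * Mᵀ := by simp
  rw [e]
  exact posDef_conj Matrix.PosDef.one Mᵀ (by simpa [det_transpose] using h)

lemma transpose_of_posSemidef {n : Type*} [Fintype n] [DecidableEq n]
    {M : Matrix n n ℝ} (h : M.PosSemidef) : Mᵀ = M := by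
  have := h.1.eq; rwa [conjTranspose_eq_transpose_of_trivial] at this

open scoped MatrixOrder in
lemma isUnit_det_sqrt {n : Type*} [Fintype n] [DecidableEq n]
    {A : Matrix n n ℝ} (hA : A.PosDef) : IsUnit (CFC.sqrt A).det := by
  have h : (CFC.sqrt A).det * (CFC.sqrt A).det = A.det := by
    rw [← det_mul, CFC.sqrt_mul_sqrt_self A hA.posSemidef.nonneg]
  have := hA.det_pos
  refine isUnit_iff_ne_zero.2 fun h0 => ?_
  rw [h0, mul_zero] at h; exact this.ne (h ▸ rfl)

lemma posDef_kronecker {m n : Type*} [Fintype m] [DecidableEq m] [Fintype n] [DecidableEq n]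
    {A : Matrix m m ℝ} {B : Matrix n n ℝ} (hA : A.PosDef) (hB : B.PosDef) :
    (A ⊗ₖ B).PosDef := by
  exact hA.kronecker hB


lemma pd_decomp {n : Type*} [Fintype n] [DecidableEq n] {A : Matrix n n ℝ} (hA : A.PosDef) :
    ∃ (U : Matrix n n ℝ) (d : n → ℝ),
      (∀ a, 0 < d a) ∧ (∏ a, d a) = A.det ∧
      (∀ i i', A i i' = ∑ a, d a * (U i a * U i' a)) ∧
      (∀ a a', ∑ i, U i a * U i a' = if a = a' then 1 else 0) ∧
      (∀ i i', ∑ a, U i a * U i' a = if i = i' then 1 else 0) := by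
  have hH := hA.isHermitian
  refine ⟨(hH.eigenvectorUnitary : Matrix n n ℝ), hH.eigenvalues, hA.eigenvalues_pos, ?_, ?_, ?_, ?_⟩
  · rw [hH.det_eq_prod_eigenvalues]; norm_num
  · intro i i'
    conv_lhs => rw [hH.spectral_theorem, Unitary.conjStarAlgAut_apply]
    rw [Matrix.mul_apply]
    simp only [Matrix.mul_diagonal, Matrix.star_eq_conjTranspose, conjTranspose_apply,
      star_trivial, Function.comp_apply, RCLike.ofReal_real_eq_id, id_eq]
    exact Finset.sum_congr rfl fun a _ => by ring
  · intro a a'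
    have h := (Matrix.mem_unitaryGroup_iff'.mp (hH.eigenvectorUnitary).2)
    have := congrFun (congrFun h a) a'
    simpa [Matrix.mul_apply, Matrix.one_apply, star_apply] using this
  · intro i i'
    have h := (Matrix.mem_unitaryGroup_iff.mp (hH.eigenvectorUnitary).2)
    have := congrFun (congrFun h i) i'
    simpa [Matrix.mul_apply, Matrix.one_apply, star_apply] using this


-- sum4 commutation helper
lemma sum4_comm {α β γ δ : Type*} [Fintype α] [Fintype β] [Fintype γ] [Fintype δ]
    (f : α → β → γ → δ → ℝ) :
    ∑ i, ∑ j, ∑ a, ∑ b, f i j a b = ∑ a, ∑ b, ∑ i, ∑ j, f i j a b :=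
  calc ∑ i, ∑ j, ∑ a, ∑ b, f i j a b
      = ∑ i, ∑ a, ∑ j, ∑ b, f i j a b :=
        Finset.sum_congr rfl fun i _ => Finset.sum_comm
    _ = ∑ a, ∑ i, ∑ j, ∑ b, f i j a b := Finset.sum_comm
    _ = ∑ a, ∑ i, ∑ b, ∑ j, f i j a b :=
        Finset.sum_congr rfl fun a _ => Finset.sum_congr rfl fun i _ => Finset.sum_comm
    _ = ∑ a, ∑ b, ∑ i, ∑ j, f i j a b :=
        Finset.sum_congr rfl fun a _ => Finset.sum_comm
lemma key_trace {p1 p2 : ℕ} {C : Matrix (Fin p1 × Fin p2) (Fin p1 × Fin p2) ℝ} (hC : C.PosDef)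
    (hcore1 : P1 C (1 : Matrix (Fin p2) (Fin p2) ℝ) = (p2 : ℝ) • (1 : Matrix (Fin p1) (Fin p1) ℝ))
    (hcore2 : P2 C (1 : Matrix (Fin p1) (Fin p1) ℝ) = (p1 : ℝ) • (1 : Matrix (Fin p2) (Fin p2) ℝ))
    {A : Matrix (Fin p1) (Fin p1) ℝ} {B : Matrix (Fin p2) (Fin p2) ℝ}
    (hA : A.PosDef) (hB : B.PosDef) :
    (p1 * p2 : ℝ) + p2 * Real.log A.det + p1 * Real.log B.det ≤ ((A ⊗ₖ B) * C).trace := by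
  obtain ⟨U, d, hd, hdet, hAe, hUcol, hUrow⟩ := pd_decomp hA
  obtain ⟨V, e, he, hedet, hBe, hVcol, hVrow⟩ := pd_decomp hB
  have hs : ∀ x y, C y x = C x y := by
    intro x y
    have := congrFun (congrFun hC.1.eq x) y
    simpa [conjTranspose_apply] using this
  set c : Fin p1 → Fin p2 → ℝ := fun a b =>
    ∑ x : Fin p1 × Fin p2, (U x.1 a * V x.2 b) *
      ∑ y : Fin p1 × Fin p2, C x y * (U y.1 a * V y.2 b) with hc
  -- c is nonneg
  have hcnn : ∀ a b, 0 ≤ c a b := by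
    intro a b
    have := hC.posSemidef.dotProduct_mulVec_nonneg (fun x : Fin p1 × Fin p2 => U x.1 a * V x.2 b)
    simpa [hc, dotProduct, mulVec, star_trivial] using this
  -- collapse of the inner b-sum
  have hVd : ∀ (l j : Fin p2), ∑ b, V l b * V j b = if l = j then (1:ℝ) else 0 := hVrow
  have hUd : ∀ (k i : Fin p1), ∑ a, U k a * U i a = if k = i then (1:ℝ) else 0 := hUrow
  -- core conditions entrywise
  have hco1 : ∀ k i, ∑ l, C (k, l) (i, l) = if k = i then (p2:ℝ) else 0 := by
    intro k i
    have h := congrFun (congrFun hcore1 k) i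
    simp only [P1, Matrix.smul_apply, Matrix.one_apply, smul_eq_mul, ite_mul, one_mul,
      zero_mul, Finset.sum_ite_eq, Finset.mem_univ, if_true] at h
    rw [h]
    split <;> simp
  have hco2 : ∀ l j, ∑ k, C (k, l) (k, j) = if l = j then (p1:ℝ) else 0 := by
    intro l j
    have h := congrFun (congrFun hcore2 l) j
    simp only [P2, Matrix.smul_apply, Matrix.one_apply, smul_eq_mul, ite_mul, one_mul,
      zero_mul, Finset.sum_ite_eq, Finset.mem_univ, if_true] at h
    rw [h]
    split <;> simp
  -- trace identity
  have htr : ((A ⊗ₖ B) * C).trace = ∑ a, ∑ b, d a * e b * c a b := by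
    have step : ∀ x y : Fin p1 × Fin p2,
        (A ⊗ₖ B) x y * C y x
          = ∑ a, ∑ b, d a * e b * ((U x.1 a * V x.2 b) * (C x y * (U y.1 a * V y.2 b))) := by
      intro x y
      rw [kroneckerMap_apply, hAe, hBe, hs, Finset.sum_mul_sum, Finset.sum_mul]
      refine Finset.sum_congr rfl fun a _ => ?_
      rw [Finset.sum_mul]
      exact Finset.sum_congr rfl fun b _ => by ring
    rw [Matrix.trace]
    simp only [diag_apply, Matrix.mul_apply, step]
    rw [sum4_comm]
    refine Finset.sum_congr rfl fun a _ => Finset.sum_congr rfl fun b _ => ?_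
    simp only [hc, Finset.mul_sum]
  -- partial sums
  have hsum1 : ∀ a, ∑ b, c a b = (p2 : ℝ) := by
    intro a
    have inner : ∀ b, c a b = ∑ x : Fin p1 × Fin p2, ∑ y : Fin p1 × Fin p2,
        (U x.1 a * U y.1 a * C x y) * (V x.2 b * V y.2 b) := by
      intro b
      simp only [hc, Finset.mul_sum]
      exact Finset.sum_congr rfl fun x _ => Finset.sum_congr rfl fun y _ => by ring
    simp only [inner]
    rw [Finset.sum_comm]
    have swap2 : ∀ x : Fin p1 × Fin p2,
        (∑ b, ∑ y : Fin p1 × Fin p2, (U x.1 a * U y.1 a * C x y) * (V x.2 b * V y.2 b))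
          = ∑ y : Fin p1 × Fin p2,
              (U x.1 a * U y.1 a * C x y) * (if x.2 = y.2 then (1:ℝ) else 0) := by
      intro x
      rw [Finset.sum_comm]
      refine Finset.sum_congr rfl fun y _ => ?_
      rw [← Finset.mul_sum, hVrow]
    simp only [swap2]
    simp only [Fintype.sum_prod_type]
    simp only [mul_ite, mul_one, mul_zero, Finset.sum_ite_eq, Finset.mem_univ, if_true]
    have swap3 : ∀ k, (∑ l, ∑ i, U k a * U i a * C (k, l) (i, l))
        = ∑ i, (U k a * U i a) * (if k = i then (p2:ℝ) else 0) := by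
      intro k
      rw [Finset.sum_comm]
      refine Finset.sum_congr rfl fun i _ => ?_
      rw [← hco1 k i, Finset.mul_sum]
    simp only [swap3]
    simp only [mul_ite, mul_zero, Finset.sum_ite_eq, Finset.mem_univ, if_true]
    rw [← Finset.sum_mul, hUcol a a]
    simp
  have hsum2 : ∀ b, ∑ a, c a b = (p1 : ℝ) := by
    intro b
    have inner : ∀ a, c a b = ∑ x : Fin p1 × Fin p2, ∑ y : Fin p1 × Fin p2,
        (V x.2 b * V y.2 b * C x y) * (U x.1 a * U y.1 a) := by
      intro a
      simp only [hc, Finset.mul_sum]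
      exact Finset.sum_congr rfl fun x _ => Finset.sum_congr rfl fun y _ => by ring
    simp only [inner]
    rw [Finset.sum_comm]
    have swap2 : ∀ x : Fin p1 × Fin p2,
        (∑ a, ∑ y : Fin p1 × Fin p2, (V x.2 b * V y.2 b * C x y) * (U x.1 a * U y.1 a))
          = ∑ y : Fin p1 × Fin p2,
              (V x.2 b * V y.2 b * C x y) * (if x.1 = y.1 then (1:ℝ) else 0) := by
      intro x
      rw [Finset.sum_comm]
      refine Finset.sum_congr rfl fun y _ => ?_
      rw [← Finset.mul_sum, hUrow]
    simp only [swap2]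
    simp only [Fintype.sum_prod_type]
    -- goal: ∑ k, ∑ l, ∑ i, ∑ j, (V l b * V j b * C (k,l) (i,j)) * (if k = i then 1 else 0) = p1
    have swap3 : ∀ k, ∀ l, (∑ i, ∑ j, (V l b * V j b * C (k, l) (i, j)) * (if k = i then (1:ℝ) else 0))
        = ∑ j, V l b * V j b * C (k, l) (k, j) := by
      intro k l
      rw [Finset.sum_comm]
      refine Finset.sum_congr rfl fun j _ => ?_
      simp only [mul_ite, mul_one, mul_zero, Finset.sum_ite_eq, Finset.mem_univ, if_true]
    simp only [swap3]
    rw [Finset.sum_comm]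
    have swap4 : ∀ l, (∑ k, ∑ j, V l b * V j b * C (k, l) (k, j))
        = ∑ j, (V l b * V j b) * (if l = j then (p1:ℝ) else 0) := by
      intro l
      rw [Finset.sum_comm]
      refine Finset.sum_congr rfl fun j _ => ?_
      rw [← hco2 l j, Finset.mul_sum]
    simp only [swap4]
    simp only [mul_ite, mul_zero, Finset.sum_ite_eq, Finset.mem_univ, if_true]
    rw [← Finset.sum_mul, hVcol b b]
    simp
  -- pointwise inequality
  have hpt : ∀ a b, (1 + Real.log (d a) + Real.log (e b)) * c a b ≤ d a * e b * c a b := by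
    intro a b
    have h1 : Real.log (d a * e b) ≤ d a * e b - 1 :=
      Real.log_le_sub_one_of_pos (mul_pos (hd a) (he b))
    rw [Real.log_mul (hd a).ne' (he b).ne'] at h1
    have := hcnn a b
    nlinarith
  have hlogA : Real.log A.det = ∑ a, Real.log (d a) := by
    rw [← hdet, Real.log_prod (fun a _ => (hd a).ne')]
  have hlogB : Real.log B.det = ∑ b, Real.log (e b) := by
    rw [← hedet, Real.log_prod (fun b _ => (he b).ne')]
  rw [htr]
  calc (p1 * p2 : ℝ) + p2 * Real.log A.det + p1 * Real.log B.det
      = ∑ a, ∑ b, (1 + Real.log (d a) + Real.log (e b)) * c a b := by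
        have expand : ∀ a, ∑ b, (1 + Real.log (d a) + Real.log (e b)) * c a b
            = ∑ b, c a b + Real.log (d a) * (∑ b, c a b) + ∑ b, Real.log (e b) * c a b := by
          intro a
          rw [Finset.mul_sum]
          rw [← Finset.sum_add_distrib, ← Finset.sum_add_distrib]
          exact Finset.sum_congr rfl fun b _ => by ring
        simp only [expand, hsum1]
        rw [Finset.sum_add_distrib, Finset.sum_add_distrib, Finset.sum_comm]
        simp only [← Finset.sum_mul, ← hlogA]
        have h3 : ∀ b, ∑ a, Real.log (e b) * c a b = Real.log (e b) * (p1 : ℝ) := by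
          intro b; rw [← Finset.mul_sum, hsum2]
        simp only [h3, Finset.sum_const, Finset.card_univ, Fintype.card_fin, nsmul_eq_mul,
          ← Finset.sum_mul, ← hlogB]
        ring
    _ ≤ ∑ a, ∑ b, d a * e b * c a b :=
        Finset.sum_le_sum fun a _ => Finset.sum_le_sum fun b _ => hpt a b


theorem stmt14 (p1 p2 : ℕ) (hp1 : 0 < p1) (hp2 : 0 < p2)
    (C : Matrix (Fin p1 × Fin p2) (Fin p1 × Fin p2) ℝ) (hC : C.PosDef)
    (hcore1 : P1 C (1 : Matrix (Fin p2) (Fin p2) ℝ) = (p2 : ℝ) • (1 : Matrix (Fin p1) (Fin p1) ℝ))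
    (hcore2 : P2 C (1 : Matrix (Fin p1) (Fin p1) ℝ) = (p1 : ℝ) • (1 : Matrix (Fin p2) (Fin p2) ℝ))
    (H1 : Matrix (Fin p1) (Fin p1) ℝ) (H2 : Matrix (Fin p2) (Fin p2) ℝ)
    (hH1 : IsUnit H1.det) (hH2 : IsUnit H2.det) :
    SepPD (sep H1 H2 * (sep H1 H2)ᵀ) ∧
      ∀ K, SepPD K →
        dvg (sep H1 H2 * (sep H1 H2)ᵀ) (sep H1 H2 * C * (sep H1 H2)ᵀ) ≤
          dvg K (sep H1 H2 * C * (sep H1 H2)ᵀ) := by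
  have hsep : ∀ (M1 : Matrix (Fin p1) (Fin p1) ℝ) (M2 : Matrix (Fin p2) (Fin p2) ℝ),
      sep M1 M2 = M1 ⊗ₖ M2 := fun _ _ => rfl
  have hh1 : H1.det ≠ 0 := by
    intro h; rw [h] at hH1; simpa using hH1
  have hh2 : H2.det ≠ 0 := by
    intro h; rw [h] at hH2; simpa using hH2
  have hsq1 : (H1.det ^ 2 : ℝ) ≠ 0 := pow_ne_zero _ hh1
  have hsq2 : (H2.det ^ 2 : ℝ) ≠ 0 := pow_ne_zero _ hh2
  have hHdet : (sep H1 H2).det = H1.det ^ p2 * H2.det ^ p1 := by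
    rw [hsep, det_kronecker, Fintype.card_fin, Fintype.card_fin]
  have hHu : IsUnit (sep H1 H2).det := by
    rw [hHdet]; exact (hH1.pow _).mul (hH2.pow _)
  -- trace of C
  have hco1 : ∀ k i, ∑ l, C (k, l) (i, l) = if k = i then (p2:ℝ) else 0 := by
    intro k i
    have h := congrFun (congrFun hcore1 k) i
    simp only [P1, Matrix.smul_apply, Matrix.one_apply, smul_eq_mul, ite_mul, one_mul,
      zero_mul, Finset.sum_ite_eq, Finset.mem_univ, if_true] at h
    rw [h]
    split <;> simp
  have htrC : C.trace = (p1 : ℝ) * p2 := by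
    rw [Matrix.trace]
    rw [Fintype.sum_prod_type]
    simp only [Matrix.diag_apply]
    have : ∀ i : Fin p1, ∑ j : Fin p2, C (i, j) (i, j) = (p2 : ℝ) := by
      intro i
      have := hco1 i i
      simpa using this
    simp [this, Finset.sum_const, Finset.card_univ, Fintype.card_fin, nsmul_eq_mul]
  -- the LHS divergence value
  have lhs_eq : dvg (sep H1 H2 * (sep H1 H2)ᵀ) (sep H1 H2 * C * (sep H1 H2)ᵀ)
      = (p1 : ℝ) * p2 + p2 * Real.log (H1.det ^ 2) + p1 * Real.log (H2.det ^ 2) := by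
    have hdet : (sep H1 H2 * (sep H1 H2)ᵀ).det = (H1.det ^ 2) ^ p2 * (H2.det ^ 2) ^ p1 := by
      rw [det_mul, det_transpose, hHdet]; ring
    have htr : ((sep H1 H2 * (sep H1 H2)ᵀ)⁻¹ * (sep H1 H2 * C * (sep H1 H2)ᵀ)).trace
        = C.trace := by
      rw [Matrix.mul_inv_rev]
      have e1 : (sep H1 H2)ᵀ⁻¹ * (sep H1 H2)⁻¹ * (sep H1 H2 * C * (sep H1 H2)ᵀ)
          = (sep H1 H2)ᵀ⁻¹ * C * (sep H1 H2)ᵀ := by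
        rw [Matrix.mul_assoc ((sep H1 H2)ᵀ⁻¹) _ _, ← Matrix.mul_assoc ((sep H1 H2)⁻¹) _ _,
          ← Matrix.mul_assoc ((sep H1 H2)⁻¹) _ _, Matrix.nonsing_inv_mul _ hHu, Matrix.one_mul,
          Matrix.mul_assoc]
      rw [e1, Matrix.trace_mul_comm, ← Matrix.mul_assoc, Matrix.mul_nonsing_inv _
        (by rwa [det_transpose]), Matrix.one_mul]
    rw [dvg, htr, htrC, hdet, Real.log_mul (pow_ne_zero _ hsq1) (pow_ne_zero _ hsq2)]
    simp only [Real.log_pow]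
    push_cast
    ring
  refine ⟨⟨H1 * H1ᵀ, H2 * H2ᵀ, posDef_mul_transpose_self H1 hH1,
      posDef_mul_transpose_self H2 hH2, ?_⟩, ?_⟩
  · rw [hsep, hsep, ← kroneckerMap_transpose, ← mul_kronecker_mul]
  · intro K hK
    obtain ⟨S1, S2, hS1, hS2, rfl⟩ := hK
    have hA : (H1ᵀ * S1⁻¹ * H1).PosDef := posDef_conj hS1.inv H1 hH1
    have hB : (H2ᵀ * S2⁻¹ * H2).PosDef := posDef_conj hS2.inv H2 hH2
    have hdS1 : (0:ℝ) < S1.det := hS1.det_pos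
    have hdS2 : (0:ℝ) < S2.det := hS2.det_pos
    -- trace identity
    have e1 : (sep S1 S2)⁻¹ * (sep H1 H2 * C * (sep H1 H2)ᵀ)
        = ((S1⁻¹ ⊗ₖ S2⁻¹) * (H1 ⊗ₖ H2) * C) * (H1ᵀ ⊗ₖ H2ᵀ) := by
      rw [hsep, hsep, inv_kronecker, ← kroneckerMap_transpose]
      simp only [Matrix.mul_assoc]
    have e2 : (H1ᵀ ⊗ₖ H2ᵀ) * ((S1⁻¹ ⊗ₖ S2⁻¹) * (H1 ⊗ₖ H2) * C)
        = (((H1ᵀ * S1⁻¹ * H1) ⊗ₖ (H2ᵀ * S2⁻¹ * H2)) * C) := by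
      rw [← Matrix.mul_assoc, ← Matrix.mul_assoc, ← mul_kronecker_mul, ← mul_kronecker_mul]
    have htr_eq : ((sep S1 S2)⁻¹ * (sep H1 H2 * C * (sep H1 H2)ᵀ)).trace
        = (((H1ᵀ * S1⁻¹ * H1) ⊗ₖ (H2ᵀ * S2⁻¹ * H2)) * C).trace := by
      rw [e1, Matrix.trace_mul_comm, e2]
    -- key inequality
    have hkey := key_trace hC hcore1 hcore2 hA hB
    -- determinants
    have dA : (H1ᵀ * S1⁻¹ * H1).det = H1.det ^ 2 * S1.det⁻¹ := by
      rw [det_mul, det_mul, det_transpose, det_nonsing_inv, Ring.inverse_eq_inv']; ring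
    have dB : (H2ᵀ * S2⁻¹ * H2).det = H2.det ^ 2 * S2.det⁻¹ := by
      rw [det_mul, det_mul, det_transpose, det_nonsing_inv, Ring.inverse_eq_inv']; ring
    have lA : Real.log (H1ᵀ * S1⁻¹ * H1).det = Real.log (H1.det ^ 2) - Real.log S1.det := by
      rw [dA, Real.log_mul hsq1 (inv_ne_zero hdS1.ne'), Real.log_inv]; ring
    have lB : Real.log (H2ᵀ * S2⁻¹ * H2).det = Real.log (H2.det ^ 2) - Real.log S2.det := by
      rw [dB, Real.log_mul hsq2 (inv_ne_zero hdS2.ne'), Real.log_inv]; ring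
    have dK : Real.log (sep S1 S2).det
        = p2 * Real.log S1.det + p1 * Real.log S2.det := by
      rw [hsep, det_kronecker, Fintype.card_fin, Fintype.card_fin,
        Real.log_mul (pow_ne_zero _ hdS1.ne') (pow_ne_zero _ hdS2.ne'),
        Real.log_pow, Real.log_pow]
    rw [lhs_eq, dvg, htr_eq, dK]
    rw [lA, lB] at hkey
    linarith
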